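/- Let T be a closed triangle in the plane and B a finite set of points in convex position, none of which lies in T. Then B can be partitioned into three sets B₁, B₂, B₃ such that each B_i is separated from T by one of the three lines supporting the sides of T, and each B_i consists of consecutive points along the convex hull of B (so the convex hulls of B₁, B₂, B₃ are pairwise disjoint and disjoint from T). -/

import Mathlib

abbrev Pt := ℝ × ℝ

def GenPos (P : Finset Pt) : Prop :=
  ∀ p ∈ P, ∀ q ∈ P, ∀ r ∈ P, p ≠ q → p ≠ r → q ≠ r → ¬ Collinear ℝ ({p, q, r} : Set Pt)

/-- Signed area (orientation) determinant of three planar points. -/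
def det3 (a b c : Pt) : ℝ := (b.1 - a.1) * (c.2 - a.2) - (b.2 - a.2) * (c.1 - a.1)

/-- A finite set `B` in convex position, avoiding a triangle `T = conv{a,b,c}`, can be
partitioned into three parts, each separated from `T` by the line supporting one of the three
sides, with pairwise disjoint convex hulls that are also disjoint from `T`. -/
lemma det3_cyc (a b c : Pt) : det3 b c a = det3 a b c := by unfold det3; ring

lemma det3_affine (u v x y : Pt) (s t : ℝ) (h : s + t = 1) :
    det3 u v (s • x + t • y) = s * det3 u v x + t * det3 u v y := by
  have ht : t = 1 - s := by linarith
  subst ht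
  simp only [det3, Prod.fst_add, Prod.snd_add, Prod.smul_fst, Prod.smul_snd, smul_eq_mul]
  ring

lemma convex_det_lt (u v : Pt) (D : ℝ) : Convex ℝ {x : Pt | det3 u v x * D < 0} := by
  intro x hx y hy s t hs ht hst
  simp only [Set.mem_setOf_eq] at *
  rw [det3_affine u v x y s t hst]
  rcases eq_or_lt_of_le hs with h | h
  · have : t = 1 := by linarith
    simp [← h, this]; nlinarith
  · nlinarith [mul_nonneg ht (neg_nonneg.2 hy.le), mul_pos h (neg_pos.2 hx)]

lemma convex_det_le (u v : Pt) (D : ℝ) : Convex ℝ {x : Pt | 0 ≤ det3 u v x * D} := by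
  intro x hx y hy s t hs ht hst
  simp only [Set.mem_setOf_eq] at *
  rw [det3_affine u v x y s t hst]
  nlinarith [mul_nonneg hs hx, mul_nonneg ht hy]

lemma collinear_of_det3_eq_zero (u v p : Pt) (h : det3 u v p = 0) :
    Collinear ℝ ({u, v, p} : Set Pt) := by
  rcases eq_or_ne v u with rfl | hvu
  · rw [Set.insert_comm, Set.insert_idem]
    exact collinear_pair ℝ _ _
  · rw [collinear_iff_of_mem (Set.mem_insert u _)]
    refine ⟨v - u, ?_⟩
    intro x hx
    simp only [Set.mem_insert_iff, Set.mem_singleton_iff] at hx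
    rcases hx with rfl | rfl | rfl
    · exact ⟨0, by simp⟩
    · exact ⟨1, by simp⟩
    · by_cases h1 : v.1 - u.1 = 0
      · have h2 : v.2 - u.2 ≠ 0 := by
          intro h2
          apply hvu
          apply Prod.ext <;> [linarith; linarith]
        refine ⟨(x.2 - u.2) / (v.2 - u.2), ?_⟩
        have hx1 : x.1 = u.1 := by
          simp only [det3] at h
          have h3 : (v.2 - u.2) * (x.1 - u.1) = 0 := by
            linear_combination (x.2 - u.2) * h1 - h
          rcases mul_eq_zero.1 h3 with h' | h'
          · exact absurd h' h2
          · linarith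
        apply Prod.ext
        · simp only [Prod.fst_add, Prod.smul_fst, Prod.fst_sub, smul_eq_mul, vadd_eq_add]
          rw [hx1, h1]; ring
        · simp only [Prod.snd_add, Prod.smul_snd, Prod.snd_sub, smul_eq_mul, vadd_eq_add]
          field_simp
          ring
      · refine ⟨(x.1 - u.1) / (v.1 - u.1), ?_⟩
        apply Prod.ext
        · simp [Prod.smul_fst]; field_simp; ring
        · simp [Prod.smul_snd]
          simp only [det3] at h
          field_simp
          ring_nf
          ring_nf at h
          linarith

lemma mem_tri (a b c p : Pt) (hD : det3 a b c ≠ 0)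
    (h1 : 0 ≤ det3 b c p * det3 a b c)
    (h2 : 0 ≤ det3 c a p * det3 a b c)
    (h3 : 0 ≤ det3 a b p * det3 a b c) :
    p ∈ convexHull ℝ ({a, b, c} : Set Pt) := by
  set D := det3 a b c with hDdef
  set w : Fin 3 → ℝ := ![det3 b c p * D, det3 c a p * D, det3 a b p * D] with hw
  set z : Fin 3 → Pt := ![a, b, c] with hz
  have hws : ∑ i, w i = D ^ 2 := by
    simp only [hw, Fin.sum_univ_three, Matrix.cons_val_zero, Matrix.cons_val_one,
      Matrix.head_cons, Matrix.cons_val_two, Matrix.tail_cons]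
    simp only [hDdef, det3]; ring
  have hpos : (0:ℝ) < ∑ i, w i := by
    rw [hws]; positivity
  have hwnn : ∀ i ∈ Finset.univ, 0 ≤ w i := by
    intro i _
    fin_cases i
    · simpa [hw] using h1
    · simpa [hw] using h2
    · simpa [hw] using h3
  have hzs : ∀ i ∈ Finset.univ, z i ∈ ({a, b, c} : Set Pt) := by
    intro i _; fin_cases i <;> simp [hz]
  have key := Finset.centerMass_mem_convexHull Finset.univ hwnn hpos hzs
  have hsum2 : ∑ i, w i • z i = (D ^ 2) • p := by
    simp only [hw, hz, Fin.sum_univ_three, Matrix.cons_val_zero, Matrix.cons_val_one,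
      Matrix.head_cons, Matrix.cons_val_two, Matrix.tail_cons]
    apply Prod.ext <;>
      simp only [Prod.fst_add, Prod.snd_add, Prod.smul_fst, Prod.smul_snd, smul_eq_mul,
        hDdef, det3] <;> ring
  have hcm : Finset.univ.centerMass w z = p := by
    rw [Finset.centerMass, hws, hsum2, smul_smul,
      inv_mul_cancel₀ (pow_ne_zero 2 hD), one_smul]
  rwa [hcm] at key

theorem stmt16 (a b c : Pt) (habc : ¬ Collinear ℝ ({a, b, c} : Set Pt))
    (B : Finset Pt)
    (hconvpos : ∀ p ∈ B, p ∉ convexHull ℝ (↑(B.erase p) : Set Pt))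
    (hgp : GenPos (B ∪ {a, b, c}))
    (hout : ∀ p ∈ B, p ∉ convexHull ℝ ({a, b, c} : Set Pt)) :
    ∃ B1 B2 B3 : Finset Pt,
      B = B1 ∪ B2 ∪ B3 ∧
      Disjoint B1 B2 ∧ Disjoint B1 B3 ∧ Disjoint B2 B3 ∧
      (∀ p ∈ B1, det3 b c p * det3 b c a < 0) ∧
      (∀ p ∈ B2, det3 c a p * det3 c a b < 0) ∧
      (∀ p ∈ B3, det3 a b p * det3 a b c < 0) ∧
      Disjoint (convexHull ℝ (↑B1 : Set Pt)) (convexHull ℝ (↑B2 : Set Pt)) ∧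
      Disjoint (convexHull ℝ (↑B1 : Set Pt)) (convexHull ℝ (↑B3 : Set Pt)) ∧
      Disjoint (convexHull ℝ (↑B2 : Set Pt)) (convexHull ℝ (↑B3 : Set Pt)) ∧
      Disjoint (convexHull ℝ (↑B1 : Set Pt)) (convexHull ℝ ({a, b, c} : Set Pt)) ∧
      Disjoint (convexHull ℝ (↑B2 : Set Pt)) (convexHull ℝ ({a, b, c} : Set Pt)) ∧
      Disjoint (convexHull ℝ (↑B3 : Set Pt)) (convexHull ℝ ({a, b, c} : Set Pt)) := by
  replace hgp : ∀ p ∈ B ∪ ({a, b, c} : Finset Pt), ∀ q ∈ B ∪ ({a, b, c} : Finset Pt),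
      ∀ r ∈ B ∪ ({a, b, c} : Finset Pt), p ≠ q → p ≠ r → q ≠ r →
      ¬ Collinear ℝ ({p, q, r} : Set Pt) := hgp

  classical
  set D := det3 a b c with hDdef
  -- D ≠ 0
  have hD : D ≠ 0 := by
    intro h0
    exact habc (collinear_of_det3_eq_zero a b c h0)
  -- vertices distinct
  have two : ∀ (s : Set Pt) (x y : Pt), s ⊆ ({x, y} : Set Pt) → Collinear ℝ s :=
    fun s x y h => (collinear_pair ℝ x y).subset h
  have hbc : b ≠ c := by
    rintro rfl
    exact habc (two _ a b (by intro z hz; simp at hz ⊢; tauto))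
  have hca : c ≠ a := by
    rintro rfl
    exact habc (two _ c b (by intro z hz; simp at hz ⊢; tauto))
  have hab : a ≠ b := by
    rintro rfl
    exact habc (two _ a c (by intro z hz; simp at hz ⊢; tauto))
  -- vertices in triangle, B points distinct from vertices
  have hva : a ∈ convexHull ℝ ({a, b, c} : Set Pt) := subset_convexHull ℝ _ (by simp)
  have hvb : b ∈ convexHull ℝ ({a, b, c} : Set Pt) := subset_convexHull ℝ _ (by simp)
  have hvc : c ∈ convexHull ℝ ({a, b, c} : Set Pt) := subset_convexHull ℝ _ (by simp)
  have hmem : ∀ p ∈ B, p ∈ B ∪ ({a,b,c} : Finset Pt) := fun p hp =>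
    Finset.mem_union_left _ hp
  have hmema : a ∈ B ∪ ({a,b,c} : Finset Pt) := Finset.mem_union_right _ (by simp)
  have hmemb : b ∈ B ∪ ({a,b,c} : Finset Pt) := Finset.mem_union_right _ (by simp)
  have hmemc : c ∈ B ∪ ({a,b,c} : Finset Pt) := Finset.mem_union_right _ (by simp)
  -- nonvanishing determinants for points of B
  have hbc_ne : ∀ p ∈ B, det3 b c p ≠ 0 := by
    intro p hp h0
    have hpb : p ≠ b := fun h => hout p hp (h ▸ hvb)
    have hpc : p ≠ c := fun h => hout p hp (h ▸ hvc)
    apply hgp p (hmem p hp) b hmemb c hmemc hpb hpc hbc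
    have : ({p, b, c} : Set Pt) = ({b, c, p} : Set Pt) := by
      ext x; simp [Set.mem_insert_iff]; tauto
    rw [this]
    exact collinear_of_det3_eq_zero b c p h0
  have hca_ne : ∀ p ∈ B, det3 c a p ≠ 0 := by
    intro p hp h0
    have hpc : p ≠ c := fun h => hout p hp (h ▸ hvc)
    have hpa : p ≠ a := fun h => hout p hp (h ▸ hva)
    apply hgp p (hmem p hp) c hmemc a hmema hpc hpa hca
    have : ({p, c, a} : Set Pt) = ({c, a, p} : Set Pt) := by
      ext x; simp [Set.mem_insert_iff]; tauto
    rw [this]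
    exact collinear_of_det3_eq_zero c a p h0
  -- coverage
  have cover : ∀ p ∈ B, det3 b c p * D < 0 ∨ det3 c a p * D < 0 ∨ det3 a b p * D < 0 := by
    intro p hp
    by_contra hcon
    push_neg at hcon
    exact hout p hp (mem_tri a b c p hD hcon.1 hcon.2.1 hcon.2.2)
  -- partition
  set B1 := B.filter (fun p => det3 b c p * D < 0) with hB1
  set B2 := B.filter (fun p => ¬ (det3 b c p * D < 0) ∧ det3 c a p * D < 0) with hB2
  set B3 := B.filter (fun p => ¬ (det3 b c p * D < 0) ∧ ¬ (det3 c a p * D < 0)) with hB3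
  have m1 : ∀ p ∈ B1, p ∈ B ∧ det3 b c p * D < 0 := by
    intro p hp; simpa [hB1, Finset.mem_filter] using hp
  have m2 : ∀ p ∈ B2, p ∈ B ∧ ¬ (det3 b c p * D < 0) ∧ det3 c a p * D < 0 := by
    intro p hp; simpa [hB2, Finset.mem_filter] using hp
  have m3 : ∀ p ∈ B3, p ∈ B ∧ ¬ (det3 b c p * D < 0) ∧ ¬ (det3 c a p * D < 0) := by
    intro p hp; simpa [hB3, Finset.mem_filter] using hp
  -- strict positivity helpers
  have pos_bc : ∀ p ∈ B, ¬ (det3 b c p * D < 0) → 0 < det3 b c p * D := by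
    intro p hp h
    exact lt_of_le_of_ne (not_lt.1 h) (Ne.symm (mul_ne_zero (hbc_ne p hp) hD))
  have pos_ca : ∀ p ∈ B, ¬ (det3 c a p * D < 0) → 0 < det3 c a p * D := by
    intro p hp h
    exact lt_of_le_of_ne (not_lt.1 h) (Ne.symm (mul_ne_zero (hca_ne p hp) hD))
  -- convexity of the positive half-plane
  have conv_pos : ∀ (u v : Pt), Convex ℝ {x : Pt | 0 < det3 u v x * D} := by
    intro u v
    have he : {x : Pt | 0 < det3 u v x * D} = {x : Pt | det3 u v x * (-D) < 0} := by
      ext x; simp only [Set.mem_setOf_eq]; constructor <;> intro h <;> nlinarith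
    rw [he]; exact convex_det_lt u v (-D)
  -- hull containments
  have hull1 : convexHull ℝ (↑B1 : Set Pt) ⊆ {x : Pt | det3 b c x * D < 0} := by
    apply convexHull_min _ (convex_det_lt b c D)
    intro p hp
    exact (m1 p (by exact_mod_cast hp)).2
  have hull2a : convexHull ℝ (↑B2 : Set Pt) ⊆ {x : Pt | 0 < det3 b c x * D} := by
    apply convexHull_min _ (conv_pos b c)
    intro p hp
    obtain ⟨hpB, h1, _⟩ := m2 p (by exact_mod_cast hp)
    exact pos_bc p hpB h1
  have hull2b : convexHull ℝ (↑B2 : Set Pt) ⊆ {x : Pt | det3 c a x * D < 0} := by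
    apply convexHull_min _ (convex_det_lt c a D)
    intro p hp
    exact (m2 p (by exact_mod_cast hp)).2.2
  have hull3a : convexHull ℝ (↑B3 : Set Pt) ⊆ {x : Pt | 0 < det3 b c x * D} := by
    apply convexHull_min _ (conv_pos b c)
    intro p hp
    obtain ⟨hpB, h1, _⟩ := m3 p (by exact_mod_cast hp)
    exact pos_bc p hpB h1
  have hull3b : convexHull ℝ (↑B3 : Set Pt) ⊆ {x : Pt | 0 < det3 c a x * D} := by
    apply convexHull_min _ (conv_pos c a)
    intro p hp
    obtain ⟨hpB, _, h2⟩ := m3 p (by exact_mod_cast hp)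
    exact pos_ca p hpB h2
  have hull3c : convexHull ℝ (↑B3 : Set Pt) ⊆ {x : Pt | det3 a b x * D < 0} := by
    apply convexHull_min _ (convex_det_lt a b D)
    intro p hp
    obtain ⟨hpB, h1, h2⟩ := m3 p (by exact_mod_cast hp)
    rcases cover p hpB with h | h | h
    · exact absurd h h1
    · exact absurd h h2
    · exact h
  -- triangle containments
  have e_bc_b : det3 b c b = 0 := by unfold det3; ring
  have e_bc_c : det3 b c c = 0 := by unfold det3; ring
  have e_bc_a : det3 b c a = D := det3_cyc a b c
  have e_ca_c : det3 c a c = 0 := by unfold det3; ring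
  have e_ca_a : det3 c a a = 0 := by unfold det3; ring
  have e_ca_b : det3 c a b = D := by rw [hDdef]; unfold det3; ring
  have e_ab_a : det3 a b a = 0 := by unfold det3; ring
  have e_ab_b : det3 a b b = 0 := by unfold det3; ring
  have hT1 : convexHull ℝ ({a, b, c} : Set Pt) ⊆ {x : Pt | 0 ≤ det3 b c x * D} := by
    apply convexHull_min _ (convex_det_le b c D)
    intro x hx
    simp only [Set.mem_insert_iff, Set.mem_singleton_iff] at hx
    rcases hx with rfl | rfl | rfl <;> simp only [Set.mem_setOf_eq, e_bc_a, e_bc_b, e_bc_c]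
    · exact mul_self_nonneg D
    · simp
    · simp
  have hT2 : convexHull ℝ ({a, b, c} : Set Pt) ⊆ {x : Pt | 0 ≤ det3 c a x * D} := by
    apply convexHull_min _ (convex_det_le c a D)
    intro x hx
    simp only [Set.mem_insert_iff, Set.mem_singleton_iff] at hx
    rcases hx with rfl | rfl | rfl <;> simp only [Set.mem_setOf_eq, e_ca_a, e_ca_b, e_ca_c]
    · simp
    · exact mul_self_nonneg D
    · simp
  have hT3 : convexHull ℝ ({a, b, c} : Set Pt) ⊆ {x : Pt | 0 ≤ det3 a b x * D} := by
    apply convexHull_min _ (convex_det_le a b D)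
    intro x hx
    simp only [Set.mem_insert_iff, Set.mem_singleton_iff] at hx
    rcases hx with rfl | rfl | rfl <;> simp only [Set.mem_setOf_eq, e_ab_a, e_ab_b]
    · simp
    · simp
    · exact mul_self_nonneg D
  refine ⟨B1, B2, B3, ?_, ?_, ?_, ?_, ?_, ?_, ?_, ?_, ?_, ?_, ?_, ?_, ?_⟩
  -- union
  · ext p
    simp only [Finset.mem_union, hB1, hB2, hB3, Finset.mem_filter]
    constructor
    · intro hp
      by_cases h1 : det3 b c p * D < 0
      · exact Or.inl (Or.inl ⟨hp, h1⟩)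
      · by_cases h2 : det3 c a p * D < 0
        · exact Or.inl (Or.inr ⟨hp, h1, h2⟩)
        · exact Or.inr ⟨hp, h1, h2⟩
    · rintro ((⟨hp, _⟩ | ⟨hp, _⟩) | ⟨hp, _⟩) <;> exact hp
  · rw [Finset.disjoint_left]
    intro p hp1 hp2
    exact (m2 p hp2).2.1 (m1 p hp1).2
  · rw [Finset.disjoint_left]
    intro p hp1 hp3
    exact (m3 p hp3).2.1 (m1 p hp1).2
  · rw [Finset.disjoint_left]
    intro p hp2 hp3
    exact (m3 p hp3).2.2 (m2 p hp2).2.2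
  · intro p hp
    rw [e_bc_a]
    exact (m1 p hp).2
  · intro p hp
    rw [e_ca_b]
    exact (m2 p hp).2.2
  · intro p hp
    obtain ⟨hpB, h1, h2⟩ := m3 p hp
    rcases cover p hpB with h | h | h
    · exact absurd h h1
    · exact absurd h h2
    · exact h
  · rw [Set.disjoint_left]
    intro x h1 h2
    have a1 : det3 b c x * D < 0 := hull1 h1
    have a2 : 0 < det3 b c x * D := hull2a h2
    linarith
  · rw [Set.disjoint_left]
    intro x h1 h3
    have a1 : det3 b c x * D < 0 := hull1 h1
    have a2 : 0 < det3 b c x * D := hull3a h3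
    linarith
  · rw [Set.disjoint_left]
    intro x h2 h3
    have a1 : det3 c a x * D < 0 := hull2b h2
    have a2 : 0 < det3 c a x * D := hull3b h3
    linarith
  · rw [Set.disjoint_left]
    intro x h1 hT
    have a1 : det3 b c x * D < 0 := hull1 h1
    have a2 : 0 ≤ det3 b c x * D := hT1 hT
    linarith
  · rw [Set.disjoint_left]
    intro x h2 hT
    have a1 : det3 c a x * D < 0 := hull2b h2
    have a2 : 0 ≤ det3 c a x * D := hT2 hT
    linarith
  · rw [Set.disjoint_left]
    intro x h3 hT
    have a1 : det3 a b x * D < 0 := hull3c h3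
    have a2 : 0 ≤ det3 a b x * D := hT3 hT
    linarith
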